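/- Let G = (V+, V-; E) be a DM-irreducible balanced bipartite graph with nonnegative edge weights w, let T be a minimum-weight strongly balanced spanning tree of G rooted at a vertex r ∈ V+, let M be the perfect matching contained in T, and let A_out be a minimum-weight spanning r-out-arborescence of the auxiliary digraph G_M with respect to the weight w_M (equal to w on non-matching arcs and 0 on matching arcs). Then the spanning subgraph T ∪ {underlying edges of A_out} of G is DM-irreducible and its total weight is at most twice the minimum weight of a DM-irreducible spanning subgraph of G. -/

import Mathlib

open Sum

/-- The simple graph on `α ⊕ β` determined by an edge set `T ⊆ α × β`. -/
def sg {α β : Type*} (T : Set (α × β)) : SimpleGraph (α ⊕ β) :=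
  SimpleGraph.fromRel (fun u v => ∃ a b, u = inl a ∧ v = inr b ∧ (a, b) ∈ T)

/-- Degree of `a ∈ V⁺` in the edge set `T`. -/
noncomputable def degP {α β : Type*} (T : Set (α × β)) (a : α) : ℕ :=
  {b : β | (a, b) ∈ T}.ncard

/-- Arc relation of the auxiliary digraph `G_M`. -/
def Step {α β : Type*} (E M : Set (α × β)) : (α ⊕ β) → (α ⊕ β) → Prop
  | inl a, inr b => (a, b) ∈ E
  | inr b, inl a => (a, b) ∈ M
  | _, _ => False

def auxArcs {α β : Type*} (E M : Set (α × β)) : Set ((α ⊕ β) × (α ⊕ β)) :=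
  {p | Step E M p.1 p.2}

def StronglyConnected {V : Type*} (R : V → V → Prop) : Prop :=
  ∀ u v : V, Relation.ReflTransGen R u v

def IsPerfectMatching {α β : Type*} (E M : Set (α × β)) : Prop :=
  M ⊆ E ∧ (∀ a : α, ∃! b : β, (a, b) ∈ M) ∧ (∀ b : β, ∃! a : α, (a, b) ∈ M)

def DMIrreducible {α β : Type*} (E : Set (α × β)) : Prop :=
  ∃ M, IsPerfectMatching E M ∧ StronglyConnected (Step E M)

def WeaklyConnected {V : Type*} (B : Set (V × V)) : Prop :=
  ∀ u v : V, Relation.ReflTransGen (fun x y => (x, y) ∈ B ∨ (y, x) ∈ B) u v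

/-- `B` is a spanning out-arborescence rooted at `r`. -/
def IsOutArb {V : Type*} (B : Set (V × V)) (r : V) : Prop :=
  WeaklyConnected B ∧ (¬ ∃ w, (w, r) ∈ B) ∧ ∀ v : V, v ≠ r → ∃! w, (w, v) ∈ B

/-- `T` is a strongly balanced spanning tree of `(V⁺, V⁻; E)` rooted at `r ∈ V⁺`. -/
def SBST {α β : Type*} (E T : Set (α × β)) (r : α) : Prop :=
  T ⊆ E ∧ (sg T).IsTree ∧ degP T r = 1 ∧ ∀ a : α, a ≠ r → degP T a = 2

/-- Total weight of an edge set. -/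
noncomputable def Wt {α β : Type*} (w : α × β → ℝ) (F : Set (α × β)) : ℝ :=
  ∑ᶠ p ∈ F, w p

/-- Weight `w_M` on arcs of the auxiliary digraph: `w` on forward arcs, `0` on the
reversed matching arcs. -/
def wAux {α β : Type*} (w : α × β → ℝ) : ((α ⊕ β) × (α ⊕ β)) → ℝ
  | (inl a, inr b) => w (a, b)
  | _ => 0

/-- Total `w_M`-weight of an arc set. -/
noncomputable def WtArc {α β : Type*} (w : α × β → ℝ) (B : Set ((α ⊕ β) × (α ⊕ β))) : ℝ :=
  ∑ᶠ p ∈ B, wAux w p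

/-- Underlying undirected edges of an arc set of the auxiliary digraph. -/
def und {α β : Type*} (B : Set ((α ⊕ β) × (α ⊕ β))) : Set (α × β) :=
  {p | (inl p.1, inr p.2) ∈ B ∨ (inr p.2, inl p.1) ∈ B}


section Generic

/-- ReflTransGen of a symmetric relation is symmetric. -/
lemma rtg_symm {V : Type*} {R : V → V → Prop} (hs : ∀ x y, R x y → R y x) {u v : V}
    (h : Relation.ReflTransGen R u v) : Relation.ReflTransGen R v u := by
  induction h with
  | refl => exact .refl
  | tail hstep hlast ih => exact Relation.ReflTransGen.head (hs _ _ hlast) ih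

lemma rtg_flip {V : Type*} {R : V → V → Prop} {u v : V}
    (h : Relation.ReflTransGen R u v) : Relation.ReflTransGen (fun x y => R y x) v u := by
  induction h with
  | refl => exact .refl
  | tail hstep hlast ih => exact Relation.ReflTransGen.head hlast ih

private def reachIn {V : Type*} (R : V → V → Prop) (r : V) : ℕ → V → Prop
  | 0, v => v = r
  | n + 1, v => ∃ u, R v u ∧ reachIn R r n u

/-- From every vertex reaching `r`, extract a "first-step" function together with a
decreasing potential. -/
lemma descend {V : Type*} (R : V → V → Prop) (r : V) (h : ∀ v, Relation.ReflTransGen R v r) :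
    ∃ (g : V → V) (d : V → ℕ), ∀ v, v ≠ r → R v (g v) ∧ d (g v) < d v := by
  classical
  have hP : ∀ v, ∃ n, reachIn R r n v := by
    intro v
    induction h v using Relation.ReflTransGen.head_induction_on with
    | refl => exact ⟨0, rfl⟩
    | head hstep htail ih =>
      obtain ⟨n, hn⟩ := ih
      exact ⟨n + 1, _, hstep, hn⟩
  set d : V → ℕ := fun v => Nat.find (hP v) with hd
  have key : ∀ v, v ≠ r → ∃ u, R v u ∧ d u < d v := by
    intro v hv
    have h1 : reachIn R r (d v) v := Nat.find_spec (hP v)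
    have h0 : d v ≠ 0 := by
      intro h0
      rw [h0] at h1
      exact hv h1
    obtain ⟨m, hm⟩ := Nat.exists_eq_succ_of_ne_zero h0
    rw [hm] at h1
    obtain ⟨u, hRu, hPu⟩ := h1
    refine ⟨u, hRu, lt_of_le_of_lt (Nat.find_le hPu) ?_⟩
    omega
  refine ⟨fun v => if hv : v = r then v else (key v hv).choose, d, fun v hv => ?_⟩
  simpa [dif_neg hv] using (key v hv).choose_spec

/-- A graph whose adjacency comes from a parent function with a decreasing potential
towards a root is a tree. -/
lemma parent_tree {V : Type*} (root : V) (par : V → V) (ht : V → ℕ)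
    (hdec : ∀ v, v ≠ root → ht (par v) < ht v)
    {G : SimpleGraph V}
    (hadj : ∀ u v, G.Adj u v ↔ ((u ≠ root ∧ par u = v) ∨ (v ≠ root ∧ par v = u))) :
    G.IsTree := by
  have hreach' : ∀ n v, ht v = n → G.Reachable v root := by
    intro n
    induction n using Nat.strong_induction_on with
    | _ n ih =>
      intro v hn
      by_cases hv : v = root
      · subst hv
        exact SimpleGraph.Reachable.refl _
      · have hadjv : G.Adj v (par v) := (hadj v (par v)).2 (Or.inl ⟨hv, rfl⟩)
        exact hadjv.reachable.trans (ih (ht (par v)) (hn ▸ hdec v hv) (par v) rfl)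
  have hreach : ∀ v, G.Reachable v root := fun v => hreach' (ht v) v rfl
  have : Nonempty V := ⟨root⟩
  constructor
  · exact SimpleGraph.Connected.mk (fun u v => (hreach u).trans (hreach v).symm)
  · intro v0 c0 hc0
    classical
    -- pick a vertex of maximal potential on the cycle
    obtain ⟨u, hu, hmax⟩ := Finset.exists_max_image c0.support.toFinset ht
      ⟨v0, List.mem_toFinset.mpr c0.start_mem_support⟩
    rw [List.mem_toFinset] at hu
    set c := c0.rotate u hu with hcdef
    have hc : c.IsCycle := hc0.rotate hu
    have hmax' : ∀ y ∈ c.support, ht y ≤ ht u := by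
      intro y hy
      rw [c.support_eq_cons] at hy
      rcases List.mem_cons.mp hy with h | h
      · exact h ▸ le_refl _
      · have : y ∈ c0.support.tail := ((SimpleGraph.Walk.support_rotate c0 u hu).mem_iff).mp h
        exact hmax y (List.mem_toFinset.mpr (List.mem_of_mem_tail this))
    obtain ⟨w, hadj1, q, hq⟩ := SimpleGraph.Walk.not_nil_iff.mp hc.not_nil
    rw [hq] at hc
    obtain ⟨hqpath, hqe⟩ := (SimpleGraph.Walk.cons_isCycle_iff q hadj1).mp hc
    -- q is not nil since the cycle has length ≥ 3
    have hql : 2 ≤ q.length := by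
      have := hc.three_le_length
      simp only [SimpleGraph.Walk.length_cons] at this
      omega
    have hqrev : ¬ q.reverse.Nil := by
      rw [SimpleGraph.Walk.nil_iff_length_eq, SimpleGraph.Walk.length_reverse]
      omega
    obtain ⟨x, hadj2, q2, hq2⟩ := SimpleGraph.Walk.not_nil_iff.mp hqrev
    -- both w and x are in the support of c, hence have potential ≤ ht u
    have hwmem : w ∈ c.support := by
      rw [hq, SimpleGraph.Walk.support_cons]
      exact List.mem_cons_of_mem _ q.start_mem_support
    have hxmem : x ∈ c.support := by
      rw [hq, SimpleGraph.Walk.support_cons]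
      apply List.mem_cons_of_mem
      have : x ∈ q.reverse.support := by
        rw [hq2, SimpleGraph.Walk.support_cons]
        exact List.mem_cons_of_mem _ q2.start_mem_support
      rwa [SimpleGraph.Walk.support_reverse, List.mem_reverse] at this
    have hw : par u = w := by
      rcases (hadj u w).mp hadj1 with h | h
      · exact h.2
      · exact absurd (hmax' w hwmem) (not_le.mpr (h.2 ▸ hdec w h.1))
    have hx : par u = x := by
      rcases (hadj u x).mp hadj2 with h | h
      · exact h.2
      · exact absurd (hmax' x hxmem) (not_le.mpr (h.2 ▸ hdec x h.1))
    -- so w = x, but the edge s(u, x) is in q.edges while s(u, w) is not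
    have hxw : x = w := hx ▸ hw.symm ▸ rfl
    apply hqe
    have : s(u, x) ∈ q.reverse.edges := by
      rw [hq2, SimpleGraph.Walk.edges_cons]
      exact List.mem_cons_self
    rw [SimpleGraph.Walk.edges_reverse, List.mem_reverse] at this
    rwa [hxw] at this

end Generic

section Matching

variable {α β : Type*}

lemma matching_fn {E M : Set (α × β)} (hM : IsPerfectMatching E M) :
    ∃ (μ : α → β) (ν : β → α), (∀ a b, ((a, b) ∈ M ↔ b = μ a)) ∧
      (∀ a b, ((a, b) ∈ M ↔ a = ν b)) ∧ (∀ a, ν (μ a) = a) ∧ (∀ b, μ (ν b) = b) := by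
  choose μ hμ using hM.2.1
  choose ν hν using hM.2.2
  have h1 : ∀ a b, (a, b) ∈ M ↔ b = μ a :=
    fun a b => ⟨fun h => (hμ a).2 b h, fun h => h ▸ (hμ a).1⟩
  have h2 : ∀ a b, (a, b) ∈ M ↔ a = ν b :=
    fun a b => ⟨fun h => (hν b).2 a h, fun h => h ▸ (hν b).1⟩
  exact ⟨μ, ν, h1, h2, fun a => ((h2 a (μ a)).mp ((h1 a (μ a)).mpr rfl)).symm,
    fun b => ((h1 (ν b) b).mp ((h2 (ν b) b).mpr rfl)).symm⟩

lemma sg_adj {T : Set (α × β)} {u v : α ⊕ β} :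
    (sg T).Adj u v ↔ ∃ p ∈ T, (u = inl p.1 ∧ v = inr p.2) ∨ (u = inr p.2 ∧ v = inl p.1) := by
  rw [sg, SimpleGraph.fromRel_adj]
  constructor
  · rintro ⟨hne, (⟨a, b, rfl, rfl, hab⟩ | ⟨a, b, rfl, rfl, hab⟩)⟩
    · exact ⟨(a, b), hab, Or.inl ⟨rfl, rfl⟩⟩
    · exact ⟨(a, b), hab, Or.inr ⟨rfl, rfl⟩⟩
  · rintro ⟨p, hp, (⟨rfl, rfl⟩ | ⟨rfl, rfl⟩)⟩
    · exact ⟨by simp, Or.inl ⟨p.1, p.2, rfl, rfl, hp⟩⟩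
    · exact ⟨by simp, Or.inr ⟨p.1, p.2, rfl, rfl, hp⟩⟩

lemma sg_adj_inl_inr {T : Set (α × β)} {a : α} {b : β} :
    (sg T).Adj (inl a) (inr b) ↔ (a, b) ∈ T := by
  rw [sg_adj]
  constructor
  · rintro ⟨p, hp, (⟨h1, h2⟩ | ⟨h1, h2⟩)⟩
    · obtain rfl : a = p.1 := inl.inj h1
      obtain rfl : b = p.2 := inr.inj h2
      exact hp
    · exact absurd h1 (by simp)
  · intro h
    exact ⟨(a, b), h, Or.inl ⟨rfl, rfl⟩⟩

end Matching

section Weights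

variable {α β : Type*} [Fintype α] [Fintype β] {w : α × β → ℝ}

lemma Wt_mono (hw : ∀ e, 0 ≤ w e) {F1 F2 : Set (α × β)} (h : F1 ⊆ F2) :
    Wt w F1 ≤ Wt w F2 := by
  classical
  rw [Wt, Wt, finsum_mem_eq_finite_toFinset_sum _ F1.toFinite,
    finsum_mem_eq_finite_toFinset_sum _ F2.toFinite]
  apply Finset.sum_le_sum_of_subset_of_nonneg
  · intro x hx
    rw [Set.Finite.mem_toFinset] at hx ⊢
    exact h hx
  · exact fun i _ _ => hw i

lemma Wt_union_le (hw : ∀ e, 0 ≤ w e) (X Y : Set (α × β)) :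
    Wt w (X ∪ Y) ≤ Wt w X + Wt w Y := by
  classical
  rw [Wt, Wt, Wt, finsum_mem_eq_finite_toFinset_sum _ (X ∪ Y).toFinite,
    finsum_mem_eq_finite_toFinset_sum _ X.toFinite,
    finsum_mem_eq_finite_toFinset_sum _ Y.toFinite]
  have hXY : (X ∪ Y).toFinite.toFinset = X.toFinite.toFinset ∪ Y.toFinite.toFinset := by
    ext p; simp only [Set.Finite.mem_toFinset, Finset.mem_union]; exact Iff.rfl
  rw [hXY]
  calc ∑ p ∈ X.toFinite.toFinset ∪ Y.toFinite.toFinset, w p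
      ≤ (∑ p ∈ X.toFinite.toFinset ∪ Y.toFinite.toFinset, w p)
        + ∑ p ∈ X.toFinite.toFinset ∩ Y.toFinite.toFinset, w p := by
        have : 0 ≤ ∑ p ∈ X.toFinite.toFinset ∩ Y.toFinite.toFinset, w p :=
          Finset.sum_nonneg fun i _ => hw i
        linarith
    _ = _ := Finset.sum_union_inter

/-- Forward edges of an arc set. -/
def fwd (B : Set ((α ⊕ β) × (α ⊕ β))) : Set (α × β) :=
  {p | (inl p.1, inr p.2) ∈ B}

lemma WtArc_eq (w : α × β → ℝ) (B : Set ((α ⊕ β) × (α ⊕ β))) :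
    WtArc w B = Wt w (fwd B) := by
  classical
  have hinj : Set.InjOn (fun p : α × β => ((inl p.1 : α ⊕ β), (inr p.2 : α ⊕ β))) (fwd B) := by
    intro p _ q _ h
    simp only [Prod.mk.injEq, inl.injEq, inr.injEq] at h
    exact Prod.ext h.1 h.2
  have himg : Wt w (fwd B) =
      ∑ᶠ q ∈ (fun p : α × β => ((inl p.1 : α ⊕ β), (inr p.2 : α ⊕ β))) '' (fwd B), wAux w q := by
    rw [finsum_mem_image hinj]; rfl
  set I := (fun p : α × β => ((inl p.1 : α ⊕ β), (inr p.2 : α ⊕ β))) '' (fwd B) with hI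
  have hsplit : B = I ∪ (B \ I) := by
    rw [Set.union_diff_cancel]
    rintro q ⟨p, hp, rfl⟩
    exact hp
  have hdisj : Disjoint I (B \ I) := Set.disjoint_sdiff_right
  have hzero : ∑ᶠ q ∈ B \ I, wAux w q = 0 := by
    apply finsum_mem_of_eqOn_zero
    rintro ⟨u, v⟩ ⟨hqB, hqI⟩
    match u, v with
    | inl a, inl a' => rfl
    | inr b, inl a' => rfl
    | inr b, inr b' => rfl
    | inl a, inr b =>
      exfalso
      exact hqI ⟨(a, b), hqB, rfl⟩
  rw [WtArc, himg]
  conv_lhs => rw [hsplit]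
  rw [finsum_mem_union hdisj (Set.toFinite _) (Set.toFinite _), hzero, add_zero]

end Weights

section ExistsSBST

variable {α β : Type*} [Fintype α] [Fintype β]

lemma exists_SBST (E F : Set (α × β)) (hFE : F ⊆ E) (r : α) (hF : DMIrreducible F) :
    ∃ T' : Set (α × β), T' ⊆ F ∧ SBST E T' r := by
  classical
  obtain ⟨MF, hMF, hSC⟩ := hF
  obtain ⟨μ, ν, hμ, hν, hνμ, hμν⟩ := matching_fn hMF
  set D : α → α → Prop := fun a a' => (a, μ a') ∈ F ∧ a' ≠ a with hD
  -- every vertex of α reaches r in D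
  have hconv : ∀ v : α ⊕ β, Relation.ReflTransGen (Step F MF) v (inl r) →
      Relation.ReflTransGen D (Sum.elim id ν v) r := by
    intro v hv
    induction hv using Relation.ReflTransGen.head_induction_on with
    | refl => exact .refl
    | head hstep htail ih =>
      rename_i x y
      match x, y, hstep with
      | inl a, inr b, hstep =>
        have hstep' : (a, b) ∈ F := hstep
        simp only [Sum.elim_inr] at ih
        simp only [Sum.elim_inl]
        by_cases hab : ν b = a
        · exact hab ▸ ih
        · exact Relation.ReflTransGen.head ⟨by rwa [hμν b], hab⟩ ih
      | inr b, inl a, hstep =>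
        have hstep' : (a, b) ∈ MF := hstep
        have : ν b = a := ((hν a b).mp hstep').symm
        simpa [this] using ih
  have hreach : ∀ a : α, Relation.ReflTransGen D a r := fun a => hconv (inl a) (hSC _ _)
  obtain ⟨g, d, hg⟩ := descend D r hreach
  set T' : Set (α × β) := MF ∪ {p : α × β | p.1 ≠ r ∧ p.2 = μ (g p.1)} with hT'
  have memT' : ∀ a b, ((a, b) ∈ T' ↔ (b = μ a ∨ (a ≠ r ∧ b = μ (g a)))) := by
    intro a b
    simp only [hT', Set.mem_union, Set.mem_setOf_eq, hμ a b]
  have hT'F : T' ⊆ F := by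
    rintro ⟨a, b⟩ hab
    rcases (memT' a b).mp hab with rfl | ⟨har, rfl⟩
    · exact hMF.1 ((hμ a (μ a)).mpr rfl)
    · exact (hg a har).1.1
  have hμinj : Function.Injective μ := Function.LeftInverse.injective hνμ
  have hgne : ∀ a, a ≠ r → g a ≠ a := fun a har => (hg a har).1.2
  refine ⟨T', hT'F, fun p hp => hFE (hT'F hp), ?_, ?_, ?_⟩
  · -- tree
    apply parent_tree (inl r)
      (Sum.elim (fun a => inr (μ (g a))) (fun b => inl (ν b)))
      (Sum.elim (fun a => 2 * d a) (fun b => 2 * d (ν b) + 1))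
    · rintro (a | b) hne
      · have har : a ≠ r := by simpa using hne
        simp only [Sum.elim_inl, Sum.elim_inr, hνμ]
        have := (hg a har).2
        omega
      · simp only [Sum.elim_inl, Sum.elim_inr]
        omega
    · rintro (a | b) (a' | b')
      · simp only [sg_adj]
        constructor
        · rintro ⟨p, hp, (⟨h1, h2⟩ | ⟨h1, h2⟩)⟩ <;> simp at h1 h2
        · rintro (⟨h1, h2⟩ | ⟨h1, h2⟩) <;> simp at h2
      · rw [sg_adj_inl_inr, memT' a b']
        constructor
        · rintro (hb | ⟨har, rfl⟩)
          · refine Or.inr ⟨by simp, ?_⟩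
            simp only [Sum.elim_inr, inl.injEq]
            rw [hb, hνμ]
          · exact Or.inl ⟨by simpa using har, by simp⟩
        · rintro (⟨h1, h2⟩ | ⟨h1, h2⟩)
          · simp only [Sum.elim_inl, inr.injEq] at h2
            exact Or.inr ⟨by simpa using h1, h2.symm⟩
          · simp only [Sum.elim_inr, inl.injEq] at h2
            left
            rw [← h2, hμν]
      · rw [(sg T').adj_comm, sg_adj_inl_inr, memT' a' b]
        constructor
        · rintro (hb | ⟨har, rfl⟩)
          · refine Or.inl ⟨by simp, ?_⟩
            simp only [Sum.elim_inr, inl.injEq]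
            rw [hb, hνμ]
          · exact Or.inr ⟨by simpa using har, by simp⟩
        · rintro (⟨h1, h2⟩ | ⟨h1, h2⟩)
          · simp only [Sum.elim_inr, inl.injEq] at h2
            left
            rw [← h2, hμν]
          · simp only [Sum.elim_inl, inr.injEq] at h2
            exact Or.inr ⟨by simpa using h1, h2.symm⟩
      · simp only [sg_adj]
        constructor
        · rintro ⟨p, hp, (⟨h1, h2⟩ | ⟨h1, h2⟩)⟩ <;> simp at h1 h2
        · rintro (⟨h1, h2⟩ | ⟨h1, h2⟩) <;> simp at h2
  · -- degP T' r = 1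
    have : {b : β | (r, b) ∈ T'} = {μ r} := by
      ext b
      simp only [Set.mem_setOf_eq, memT', Set.mem_singleton_iff]
      constructor
      · rintro (h | ⟨h, _⟩)
        · exact h
        · exact absurd rfl h
      · exact Or.inl
    rw [degP, this, Set.ncard_singleton]
  · -- degP T' a = 2
    intro a har
    have : {b : β | (a, b) ∈ T'} = {μ a, μ (g a)} := by
      ext b
      simp only [Set.mem_setOf_eq, memT', Set.mem_insert_iff, Set.mem_singleton_iff]
      constructor
      · rintro (h | ⟨_, h⟩)
        · exact Or.inl h
        · exact Or.inr h
      · rintro (h | h)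
        · exact Or.inl h
        · exact Or.inr ⟨har, h⟩
    rw [degP, this, Set.ncard_pair]
    intro h
    exact hgne a har (hμinj h.symm)

end ExistsSBST

section ExistsArb

variable {α β : Type*} [Fintype α] [Fintype β]

lemma exists_arb (E F M : Set (α × β)) (r : α)
    (hM : IsPerfectMatching E M) (hF : DMIrreducible F) :
    ∃ B' : Set ((α ⊕ β) × (α ⊕ β)), B' ⊆ auxArcs F M ∧ IsOutArb B' (inl r) := by
  classical
  obtain ⟨μ, ν, hμ, hν, hνμ, hμν⟩ := matching_fn hM
  obtain ⟨MF, hMF, hSC⟩ := hF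
  obtain ⟨μF, νF, hμF, hνF, hνμF, hμνF⟩ := matching_fn hMF
  have hμinj : Function.Injective μ := Function.LeftInverse.injective hνμ
  have hμFinj : Function.Injective μF := Function.LeftInverse.injective hνμF
  set D : α → α → Prop := fun a a' => (a, μ a') ∈ F with hD
  set Rb : Set α := {a | Relation.ReflTransGen D r a} with hRb
  -- key : the two matchings have the same image on Rb
  have hsub : μF '' Rb ⊆ μ '' Rb := by
    rintro b ⟨a, ha, rfl⟩
    have h1 : (a, μF a) ∈ F := hMF.1 ((hμF a (μF a)).mpr rfl)
    have h2 : D a (ν (μF a)) := by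
      show (a, μ (ν (μF a))) ∈ F
      rwa [hμν]
    exact ⟨ν (μF a), Relation.ReflTransGen.tail ha h2, hμν _⟩
  have hkey : μF '' Rb = μ '' Rb := by
    apply Set.eq_of_subset_of_ncard_le hsub _ (Set.toFinite _)
    rw [Set.ncard_image_of_injective _ hμinj, Set.ncard_image_of_injective _ hμFinj]
  -- Rb = univ
  have hRuniv : ∀ a : α, a ∈ Rb := by
    intro a0
    have hcl : ∀ u v : α ⊕ β, Step F MF u v →
        Sum.elim (· ∈ Rb) (fun b => ν b ∈ Rb) u → Sum.elim (· ∈ Rb) (fun b => ν b ∈ Rb) v := by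
      rintro (a | b) (a' | b') hstep hu
      · exact hstep.elim
      · have hstep' : (a, b') ∈ F := hstep
        simp only [Sum.elim_inl] at hu
        simp only [Sum.elim_inr]
        refine Relation.ReflTransGen.tail hu ?_
        show (a, μ (ν b')) ∈ F
        rwa [hμν]
      · have hstep' : (a', b) ∈ MF := hstep
        simp only [Sum.elim_inr] at hu
        simp only [Sum.elim_inl]
        have hbmem : b ∈ μF '' Rb := by
          rw [hkey]
          exact ⟨ν b, hu, hμν b⟩
        obtain ⟨a'', ha'', hb⟩ := hbmem
        have : a' = νF b := (hνF a' b).mp hstep'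
        have : a' = a'' := by
          rw [this, ← hb, hνμF]
        exact this ▸ ha''
      · exact hstep.elim
    have hgen : ∀ v : α ⊕ β, Relation.ReflTransGen (Step F MF) (inl r) v →
        Sum.elim (· ∈ Rb) (fun b => ν b ∈ Rb) v := by
      intro v hv
      induction hv with
      | refl => exact Relation.ReflTransGen.refl
      | tail hrtg hstep ih => exact hcl _ _ hstep ih
    exact hgen (inl a0) (hSC _ _)
  -- every vertex is reachable from inl r in Step F M
  have hfromr : ∀ v : α ⊕ β, Relation.ReflTransGen (Step F M) (inl r) v := by
    have hinl : ∀ a : α, Relation.ReflTransGen (Step F M) (inl r) (inl a) := by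
      intro a
      have := hRuniv a
      rw [hRb, Set.mem_setOf_eq] at this
      induction this with
      | refl => exact .refl
      | tail hrtg hstep ih =>
        rename_i a' a''
        have h1 : Step F M (inl a') (inr (μ a'')) := hstep
        have h2 : Step F M (inr (μ a'')) (inl a'') := by
          show (a'', μ a'') ∈ M
          exact (hμ a'' (μ a'')).mpr rfl
        exact (ih.tail h1).tail h2
    rintro (a | b)
    · exact hinl a
    · have h1 : Step F M (inl (νF b)) (inr b) := by
        show (νF b, b) ∈ F
        exact hMF.1 ((hνF (νF b) b).mpr rfl)
      exact (hinl (νF b)).tail h1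
  -- flip and descend
  have hflip : ∀ v : α ⊕ β, Relation.ReflTransGen (fun x y => Step F M y x) v (inl r) :=
    fun v => rtg_flip (hfromr v)
  obtain ⟨g, d, hg⟩ := descend _ (inl r) hflip
  set B' : Set ((α ⊕ β) × (α ⊕ β)) := {q | q.2 ≠ inl r ∧ q.1 = g q.2} with hB'
  have hB'arcs : B' ⊆ auxArcs F M := by
    rintro ⟨x, y⟩ ⟨hy, hx⟩
    have hstep : Step F M (g y) y := (hg y hy).1
    have hx' : x = g y := hx
    show Step F M x y
    rwa [hx']
  refine ⟨B', hB'arcs, ?_, ?_, ?_⟩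
  · -- weakly connected
    have hto : ∀ n (v : α ⊕ β), d v = n →
        Relation.ReflTransGen (fun x y => (x, y) ∈ B' ∨ (y, x) ∈ B') v (inl r) := by
      intro n
      induction n using Nat.strong_induction_on with
      | _ n ih =>
        intro v hn
        by_cases hv : v = inl r
        · exact hv ▸ .refl
        · have hstep : (v, g v) ∈ B' ∨ (g v, v) ∈ B' := Or.inr ⟨hv, rfl⟩
          exact Relation.ReflTransGen.head hstep
            (ih (d (g v)) (hn ▸ (hg v hv).2) (g v) rfl)
    intro u v
    have hsym : ∀ x y : α ⊕ β, ((x, y) ∈ B' ∨ (y, x) ∈ B') → ((y, x) ∈ B' ∨ (x, y) ∈ B') :=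
      fun x y h => h.symm
    exact (hto (d u) u rfl).trans (rtg_symm hsym (hto (d v) v rfl))
  · -- no in-arc at the root
    rintro ⟨x, hx, -⟩
    exact hx rfl
  · -- unique in-arc elsewhere
    intro v hv
    exact ⟨g v, ⟨hv, rfl⟩, fun y hy => hy.2⟩

end ExistsArb

theorem stmt17 {α β : Type*} [Fintype α] [Fintype β]
    (hbal : Fintype.card α = Fintype.card β)
    (E : Set (α × β)) (hDM : DMIrreducible E)
    (w : α × β → ℝ) (hw : ∀ e, 0 ≤ w e) (r : α)
    (T : Set (α × β)) (hT : SBST E T r)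
    (hTmin : ∀ T' : Set (α × β), SBST E T' r → Wt w T ≤ Wt w T')
    (M : Set (α × β)) (hM : IsPerfectMatching E M) (hMT : M ⊆ T)
    (B : Set ((α ⊕ β) × (α ⊕ β))) (hB : B ⊆ auxArcs E M) (hBarb : IsOutArb B (inl r))
    (hBmin : ∀ B' : Set ((α ⊕ β) × (α ⊕ β)),
      B' ⊆ auxArcs E M → IsOutArb B' (inl r) → WtArc w B ≤ WtArc w B') :
    DMIrreducible (T ∪ und B) ∧
      ∀ F : Set (α × β), F ⊆ E → DMIrreducible F →
        Wt w (T ∪ und B) ≤ 2 * Wt w F := by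
  classical
  obtain ⟨μ, ν, hμ, hν, hνμ, hμν⟩ := matching_fn hM
  constructor
  · -- DM-irreducibility of T ∪ und B
    refine ⟨M, ⟨hMT.trans Set.subset_union_left, hM.2.1, hM.2.2⟩, ?_⟩
    -- every vertex is reachable from inl r, using the arborescence B
    have hfrom : ∀ v : α ⊕ β, Relation.ReflTransGen (Step (T ∪ und B) M) (inl r) v := by
      have hinB : ∀ v : α ⊕ β,
          Relation.ReflTransGen (fun x y : α ⊕ β => (x, y) ∈ B) (inl r) v := by
        intro v
        have hwk := hBarb.1 (inl r) v
        induction hwk with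
        | refl => exact .refl
        | tail hrtg hstep ih =>
          rename_i x y
          rcases hstep with h | h
          · exact ih.tail h
          · by_cases hx : x = inl r
            · exact absurd ⟨y, hx ▸ h⟩ hBarb.2.1
            · rcases Relation.ReflTransGen.cases_tail ih with heq | ⟨u, hu, hub⟩
              · exact absurd heq hx
              · obtain ⟨w₀, -, huniq⟩ := hBarb.2.2 x hx
                rwa [huniq y h, ← huniq u hub]
      intro v
      refine Relation.ReflTransGen.mono ?_ _ _ (hinB v)
      rintro (a | b) (a' | b') hxy
      · exact (hB hxy).elim
      · exact Or.inr (Or.inl hxy)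
      · exact hB hxy
      · exact (hB hxy).elim
    -- every vertex reaches inl r, using the tree T
    have hto : ∀ v : α ⊕ β, Relation.ReflTransGen (Step (T ∪ und B) M) v (inl r) := by
      -- the unique non-matching neighbour function f
      have hNr : {b : β | (r, b) ∈ T} = {μ r} := by
        obtain ⟨b0, hb0⟩ := Set.ncard_eq_one.mp hT.2.2.1
        have : μ r ∈ {b : β | (r, b) ∈ T} := hMT ((hμ r (μ r)).mpr rfl)
        rw [hb0] at this ⊢
        rw [Set.mem_singleton_iff] at this
        rw [this]
      have hfa : ∀ a : α, ∃ a', a ≠ r →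
          (a' ≠ a ∧ ∀ b, ((a, b) ∈ T ↔ (b = μ a ∨ b = μ a'))) := by
        intro a
        by_cases har : a = r
        · exact ⟨r, fun h => absurd har h⟩
        · obtain ⟨b1, b2, hne, hset⟩ := Set.ncard_eq_two.mp (hT.2.2.2 a har)
          have hμmem : μ a ∈ {b : β | (a, b) ∈ T} := hMT ((hμ a (μ a)).mpr rfl)
          rw [hset] at hμmem
          have hmem : ∀ b, ((a, b) ∈ T ↔ b ∈ ({b1, b2} : Set β)) := by
            intro b
            rw [← hset]
            exact Iff.rfl
          rcases hμmem with h1 | h2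
          · refine ⟨ν b2, fun _ => ⟨?_, ?_⟩⟩
            · intro h
              apply hne
              rw [← h1, ← h]
              exact hμν b2
            · intro b
              rw [hmem b, hμν, ← h1]
              simp [Set.mem_insert_iff, Set.mem_singleton_iff]
          · refine ⟨ν b1, fun _ => ⟨?_, ?_⟩⟩
            · intro h
              apply hne
              rw [← h2, ← h]
              exact (hμν b1).symm
            · intro b
              rw [hmem b, hμν, ← h2]
              simp [Set.mem_insert_iff, Set.mem_singleton_iff]
              tauto
      choose f hf using hfa
      set Rset : Set α := {a | ∃ n, f^[n] a = r} with hRset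
      have hrR : r ∈ Rset := ⟨0, rfl⟩
      have hstepR : ∀ a, a ≠ r → (a ∈ Rset ↔ f a ∈ Rset) := by
        intro a har
        constructor
        · rintro ⟨n, hn⟩
          match n, hn with
          | 0, hn => exact absurd hn har
          | m + 1, hn =>
            rw [Function.iterate_succ_apply] at hn
            exact ⟨m, hn⟩
        · rintro ⟨n, hn⟩
          exact ⟨n + 1, by rwa [Function.iterate_succ_apply]⟩
      -- closure of the complement of Rset under sg T adjacency
      have hcl : ∀ u v : α ⊕ β, (sg T).Adj u v →
          Sum.elim (· ∉ Rset) (fun b => ν b ∉ Rset) u →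
          Sum.elim (· ∉ Rset) (fun b => ν b ∉ Rset) v := by
        rintro (a | b) (a' | b') hadj hu
        · exact absurd hadj (by
            rw [sg_adj]
            rintro ⟨p, hp, (⟨h1, h2⟩ | ⟨h1, h2⟩)⟩ <;> simp at h1 h2)
        · rw [sg_adj_inl_inr] at hadj
          simp only [Sum.elim_inl] at hu
          simp only [Sum.elim_inr]
          have har : a ≠ r := fun h => hu (h ▸ hrR)
          rcases ((hf a har).2 b').mp hadj with h | h
          · rw [h, hνμ]; exact hu
          · rw [h, hνμ]
            intro hfa
            exact hu (((hstepR a har).mpr hfa))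
        · rw [(sg T).adj_comm, sg_adj_inl_inr] at hadj
          simp only [Sum.elim_inr] at hu
          simp only [Sum.elim_inl]
          by_cases har : a' = r
          · subst har
            have : b ∈ {b : β | (a', b) ∈ T} := hadj
            rw [hNr, Set.mem_singleton_iff] at this
            rw [this, hνμ] at hu
            exact absurd hrR hu
          · rcases ((hf a' har).2 b).mp hadj with h | h
            · rw [h, hνμ] at hu
              exact hu
            · rw [h, hνμ] at hu
              intro ha'
              exact hu ((hstepR a' har).mp ha')
        · exact absurd hadj (by
            rw [sg_adj]
            rintro ⟨p, hp, (⟨h1, h2⟩ | ⟨h1, h2⟩)⟩ <;> simp at h1 h2)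
      -- all of α is in Rset
      have hall : ∀ a : α, a ∈ Rset := by
        intro a
        by_contra ha
        have hconn := hT.2.1.isConnected.preconnected (inl a) (inl r)
        rw [SimpleGraph.reachable_iff_reflTransGen] at hconn
        have hgen : ∀ v : α ⊕ β, Relation.ReflTransGen (sg T).Adj (inl a) v →
            Sum.elim (· ∉ Rset) (fun b => ν b ∉ Rset) v := by
          intro v hv
          induction hv with
          | refl => exact ha
          | tail hrtg hstep ih => exact hcl _ _ hstep ih
        exact (hgen (inl r) hconn) hrR
      -- assemble the walk to the root
      have hiter : ∀ n (a : α), f^[n] a = r →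
          Relation.ReflTransGen (Step (T ∪ und B) M) (inl a) (inl r) := by
        intro n
        induction n with
        | zero =>
          intro a ha
          rw [Function.iterate_zero_apply] at ha
          subst ha
          exact .refl
        | succ n ih =>
          intro a ha
          by_cases har : a = r
          · subst har
            exact .refl
          · rw [Function.iterate_succ_apply] at ha
            have h1 : Step (T ∪ und B) M (inl a) (inr (μ (f a))) := by
              show (a, μ (f a)) ∈ T ∪ und B
              exact Or.inl (((hf a har).2 (μ (f a))).mpr (Or.inr rfl))
            have h2 : Step (T ∪ und B) M (inr (μ (f a))) (inl (f a)) := by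
              show (f a, μ (f a)) ∈ M
              exact (hμ _ _).mpr rfl
            exact Relation.ReflTransGen.head h1 (Relation.ReflTransGen.head h2 (ih (f a) ha))
      rintro (a | b)
      · obtain ⟨n, hn⟩ := hall a
        exact hiter n a hn
      · have h1 : Step (T ∪ und B) M (inr b) (inl (ν b)) := by
          show (ν b, b) ∈ M
          exact (hν _ _).mpr rfl
        obtain ⟨n, hn⟩ := hall (ν b)
        exact Relation.ReflTransGen.head h1 (hiter n _ hn)
    intro u v
    exact (hto u).trans (hfrom v)
  · intro F hFE hFDM
    obtain ⟨T', hT'F, hT'⟩ := exists_SBST E F hFE r hFDM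
    obtain ⟨B', hB'F, hB'arb⟩ := exists_arb E F M r hM hFDM
    have hB'E : B' ⊆ auxArcs E M := by
      intro q hq
      have hq' := hB'F hq
      revert hq'
      show Step F M q.1 q.2 → Step E M q.1 q.2
      obtain ⟨x, y⟩ := q
      rcases x with a | b <;> rcases y with a' | b'
      · exact id
      · exact fun h => hFE h
      · exact id
      · exact id
    have h1 : Wt w T ≤ Wt w F := (hTmin T' hT').trans (Wt_mono hw hT'F)
    have h2 : WtArc w B ≤ Wt w F := by
      refine (hBmin B' hB'E hB'arb).trans ?_
      rw [WtArc_eq]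
      apply Wt_mono hw
      intro p hp
      exact hB'F hp
    have h3 : T ∪ und B = T ∪ fwd B := by
      ext p
      simp only [Set.mem_union, und, fwd, Set.mem_setOf_eq]
      constructor
      · rintro (h | h | h)
        · exact Or.inl h
        · exact Or.inr h
        · exact Or.inl (hMT (hB h))
      · rintro (h | h)
        · exact Or.inl h
        · exact Or.inr (Or.inl h)
    calc Wt w (T ∪ und B) = Wt w (T ∪ fwd B) := by rw [h3]
      _ ≤ Wt w T + Wt w (fwd B) := Wt_union_le hw _ _
      _ = Wt w T + WtArc w B := by rw [WtArc_eq]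
      _ ≤ Wt w F + Wt w F := add_le_add h1 h2
      _ = 2 * Wt w F := by ring
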